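/- Given a word u and a substitution Θ: A → A^+, there exists a sequence of variable-identifications E (each step renaming one variable to another) such that: (i) Θ(E(u)) has the same type as Θ(u), and (ii) for all variables x, y occurring in E(u), if Θ(x) and Θ(y) are powers of the same variable, then x = y. -/

import Mathlib

/-- Two words have the same type: equal up to changing the positive exponents of
their maximal single-letter blocks. -/
def SameType {α : Type*} (u v : List α) : Prop :=
  ∃ L : List (α × ℕ × ℕ),
    (∀ p ∈ L, 0 < p.2.1 ∧ 0 < p.2.2) ∧
    List.Chain' (fun p q => p.1 ≠ q.1) L ∧
    u = L.flatMap (fun p => List.replicate p.2.1 p.1) ∧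
    v = L.flatMap (fun p => List.replicate p.2.2 p.1)

/-- The height of a word: the number of islands (maximal one-letter power factors). -/
def height {α : Type*} [DecidableEq α] (u : List α) : ℕ :=
  (u.destutter (· ≠ ·)).length

/-- A monoid M satisfies the identity u ≈ v (words in countably many variables). -/
def SatM (M : Type*) [Monoid M] (u v : List ℕ) : Prop :=
  ∀ θ : ℕ → M, (u.map θ).prod = (v.map θ).prod

/-- Property (C_ℓ): every word over a two-letter alphabet {x,y} of height at most ℓ
can form an identity of M only with a word of the same type. -/
def PropC (M : Type*) [Monoid M] (ℓ : ℕ) : Prop :=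
  ∀ x y : ℕ, x ≠ y → ∀ u v : List ℕ, u ≠ [] → (∀ z ∈ u, z = x ∨ z = y) →
    height u ≤ ℓ → SatM M u v → SameType u v

/-- w is a (positive) power of the variable c. -/
def isPow (w : List ℕ) (c : ℕ) : Prop := ∃ m, 0 < m ∧ w = List.replicate m c


lemma sameType_nil {α : Type*} : SameType ([] : List α) [] :=
  ⟨[], by simp, List.isChain_nil, by simp, by simp⟩

lemma sameType_replicate_append {α : Type*} {s t : List α} {c : α} {m k : ℕ}
    (hm : 0 < m) (hk : 0 < k) (h : SameType s t) :
    SameType (List.replicate m c ++ s) (List.replicate k c ++ t) := by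
  obtain ⟨L, hpos, hch, hu, hv⟩ := h
  match L, hpos, hch, hu, hv with
  | [], _, _, hu, hv =>
    exact ⟨[(c, m, k)], by simp [hm, hk], List.isChain_singleton _, by simp [hu], by simp [hv]⟩
  | (b, p, q) :: t', hpos, hch, hu, hv =>
    by_cases hbc : c = b
    · subst hbc
      refine ⟨(c, m + p, k + q) :: t', ?_, ?_, ?_, ?_⟩
      · intro r hr
        rw [List.mem_cons] at hr
        rcases hr with rfl | hr
        · have := hpos (c, p, q) (by simp)
          simp only at this ⊢
          omega
        · exact hpos r (by simp [hr])
      · rcases t' with _ | ⟨r, t''⟩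
        · exact List.isChain_singleton _
        · exact List.isChain_cons_cons.2 (List.isChain_cons_cons.1 hch)
      · rw [hu]
        simp only [List.flatMap_cons]
        rw [← List.append_assoc, ← List.replicate_add]
      · rw [hv]
        simp only [List.flatMap_cons]
        rw [← List.append_assoc, ← List.replicate_add]
    · refine ⟨(c, m, k) :: (b, p, q) :: t', ?_, ?_, ?_, ?_⟩
      · intro r hr
        rw [List.mem_cons] at hr
        rcases hr with rfl | hr
        · exact ⟨hm, hk⟩
        · exact hpos r hr
      · exact List.IsChain.cons hch (by simpa using hbc)
      · rw [hu]; simp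
      · rw [hv]; simp
  
lemma sameType_cons {α : Type*} {s t : List α} (a : α) (h : SameType s t) :
    SameType (a :: s) (a :: t) := by
  simpa using sameType_replicate_append (c := a) (m := 1) (k := 1)
    one_pos one_pos h

lemma sameType_append_left {α : Type*} {s t : List α} (w : List α) (h : SameType s t) :
    SameType (w ++ s) (w ++ t) := by
  induction w with
  | nil => simpa
  | cons a w ih => simpa using sameType_cons a ih

lemma isPow_unique {w : List ℕ} {c c' : ℕ} (h : isPow w c) (h' : isPow w c') : c = c' := by
  obtain ⟨m, hm, rfl⟩ := h
  obtain ⟨m', hm', he⟩ := h'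
  rcases m with _ | m; · omega
  rcases m' with _ | m'; · omega
  simp [List.replicate_succ] at he
  exact he.1

/-- Given a word u and a substitution Θ into nonempty words, one can identify some
variables of u (via a renaming map E) so that Θ(E(u)) has the same type as Θ(u) and
distinct variables of E(u) have Θ-images that are not powers of the same variable. -/
theorem stmt14 (u : List ℕ) (Θ : ℕ → List ℕ) (hne : ∀ x, Θ x ≠ []) :
    ∃ E : ℕ → ℕ,
      SameType ((u.map E).flatMap Θ) (u.flatMap Θ) ∧
      ∀ x ∈ u.map E, ∀ y ∈ u.map E,
        (∃ c, isPow (Θ x) c ∧ isPow (Θ y) c) → x = y := by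
  classical
  set E : ℕ → ℕ := fun x =>
    if h : ∃ c, isPow (Θ x) c then
      Nat.find (⟨x, h.choose_spec⟩ : ∃ y, isPow (Θ y) h.choose)
    else x with hEdef
  have hE1 : ∀ x, (¬∃ c, isPow (Θ x) c) → E x = x := by
    intro x h
    simp only [hEdef]
    rw [dif_neg h]
  have hE2 : ∀ x c, isPow (Θ x) c →
      isPow (Θ (E x)) c ∧ ∀ y, isPow (Θ y) c → E x ≤ y := by
    intro x c hc
    have h : ∃ c, isPow (Θ x) c := ⟨c, hc⟩
    have hcc : h.choose = c := isPow_unique h.choose_spec hc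
    have hEx : E x = Nat.find (⟨x, h.choose_spec⟩ : ∃ y, isPow (Θ y) h.choose) := by
      simp only [hEdef]
      rw [dif_pos h]
    constructor
    · rw [hEx]
      obtain ⟨m, hm, heq⟩ := Nat.find_spec (⟨x, h.choose_spec⟩ : ∃ y, isPow (Θ y) h.choose)
      exact ⟨m, hm, by rw [heq, hcc]⟩
    · intro y hy
      rw [hEx]
      exact Nat.find_min' _ (by rw [hcc]; exact hy)
  refine ⟨E, ?_, ?_⟩
  · induction u with
    | nil => simpa using sameType_nil
    | cons x v ih =>
      simp only [List.map_cons, List.flatMap_cons]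
      by_cases h : ∃ c, isPow (Θ x) c
      · obtain ⟨c, hc⟩ := h
        obtain ⟨hc1, -⟩ := hE2 x c hc
        obtain ⟨m, hm, hxm⟩ := hc
        obtain ⟨k, hk, hek⟩ := hc1
        rw [hxm, hek]
        exact sameType_replicate_append hk hm ih
      · rw [hE1 x h]
        exact sameType_append_left _ ih
  · intro x hx y hy ⟨c, hcx, hcy⟩
    obtain ⟨x₁, -, rfl⟩ := List.mem_map.1 hx
    obtain ⟨y₁, -, rfl⟩ := List.mem_map.1 hy
    have hx₁ : ∃ c', isPow (Θ x₁) c' := by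
      by_contra h
      rw [hE1 x₁ h] at hcx
      exact h ⟨c, hcx⟩
    have hy₁ : ∃ c', isPow (Θ y₁) c' := by
      by_contra h
      rw [hE1 y₁ h] at hcy
      exact h ⟨c, hcy⟩
    obtain ⟨cx, hcx'⟩ := hx₁
    obtain ⟨cy, hcy'⟩ := hy₁
    obtain ⟨hpx, hminx⟩ := hE2 x₁ cx hcx'
    obtain ⟨hpy, hminy⟩ := hE2 y₁ cy hcy'
    have hcxc : cx = c := isPow_unique hpx hcx
    have hcyc : cy = c := isPow_unique hpy hcy
    subst hcxc; subst hcyc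
    exact le_antisymm (hminx _ hpy) (hminy _ hpx)
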